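/- Assume D_I = D_S. Let T > 0, and for j = 1, 2 let i_j : [0,T] → ℝ be continuous with 0 ≤ i_j(t) ≤ n₀, and set s_j(t) = n₀ − i_j(t). Let (Ŝ_j, Î_j) solve system (Ĉ) with data (s_j, i_j) and initial data (S₀, I₀), and suppose 0 ≤ Î_j ≤ N̂_j := Ŝ_j + Î_j on J × [0,T]. Define î_j(t) = ⟨Î_j(·,t)⟩, let C(x) = β₀(N(x,0) + n₀x/m) + μ + D_I, M = max_{x ∈ J} C(x), and let λ > M. Then ‖î₂ − î₁‖_λ ≤ (D_I/(λ − M)) ‖i₂ − i₁‖_λ, where ‖f‖_λ = sup_{t ∈ [0,T]} e^{−λt}|f(t)|. In particular, if λ > M + D_I then the map i ↦ î is a contraction for the norm ‖·‖_λ. -/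

import Mathlib

set_option maxHeartbeats 1000000


open Real Set





private lemma abs_add_four (p q r w : ℝ) : |p + q + r + w| ≤ |p| + |q| + |r| + |w| := by
  calc |p + q + r + w| ≤ |p + q + r| + |w| := abs_add_le _ _
    _ ≤ (|p + q| + |r|) + |w| := by gcongr; exact abs_add_le _ _
    _ ≤ ((|p| + |q|) + |r|) + |w| := by gcongr; exact abs_add_le _ _

/-- Uniqueness-type Grönwall: a function with `f 0 = 0` whose derivative is dominated by
`D * |f|` vanishes. -/
private lemma ode_zero {T D : ℝ} {f g : ℝ → ℝ}
    (hd : ∀ t ∈ Icc (0:ℝ) T, HasDerivAt f (g t) t)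
    (hb : ∀ t ∈ Icc (0:ℝ) T, |g t| ≤ D * |f t|)
    (h0 : f 0 = 0) : ∀ t ∈ Icc (0:ℝ) T, f t = 0 := by
  intro t ht
  have hcont : ContinuousOn f (Icc 0 T) := fun s hs => (hd s hs).continuousAt.continuousWithinAt
  have key := norm_le_gronwallBound_of_norm_deriv_right_le (f := f) (f' := g)
    (δ := 0) (K := D) (ε := 0) (a := 0) (b := T) hcont
    (fun s hs => (hd s (Ico_subset_Icc_self hs)).hasDerivWithinAt)
    (by simp [h0])
    (fun s hs => by
      simpa [Real.norm_eq_abs] using hb s (Ico_subset_Icc_self hs)) t ht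
  rw [gronwallBound_ε0_δ0] at key
  have := abs_nonneg (f t)
  have : |f t| = 0 := le_antisymm (by simpa [Real.norm_eq_abs] using key) (abs_nonneg _)
  exact abs_eq_zero.mp this

/-- Explicit formula for solutions of `N' = -D (N - c)`, `N 0 = n`. -/
private lemma N_formula {T D c n : ℝ} {N : ℝ → ℝ}
    (hd : ∀ t ∈ Icc (0:ℝ) T, HasDerivAt N (-D * (N t - c)) t)
    (h0 : N 0 = n) :
    ∀ t ∈ Icc (0:ℝ) T, N t = c + (n - c) * Real.exp (-D * t) := by
  have hgd : ∀ s ∈ Icc (0:ℝ) T,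
      HasDerivAt (fun s => N s - (c + (n - c) * Real.exp (-D * s)))
        (-D * (N s - (c + (n - c) * Real.exp (-D * s)))) s := by
    intro s hs
    have h1 : HasDerivAt (fun s : ℝ => c + (n - c) * Real.exp (-D * s))
        ((n - c) * (Real.exp (-D * s) * (-D * 1))) s :=
      ((((hasDerivAt_id s).const_mul (-D)).exp).const_mul (n - c)).const_add c
    have h2 := (hd s hs).sub h1
    refine h2.congr_deriv ?_
    ring
  have hz := ode_zero (D := |D|) hgd
    (fun s hs => by rw [abs_mul, abs_neg]) (by simp [h0])
  intro t ht
  have := hz t ht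
  linarith [this]

/-- Continuity in the parameter `x` of the solution `I x t`. -/
private lemma I_cont (xmax m μ β₀ D T n₀ Bd : ℝ) (hm : 0 < m)
    (hμ : 0 < μ) (hβ : 0 < β₀) (hD : 0 < D) (hn₀ : 0 ≤ n₀) (hBd : 0 ≤ Bd)
    (S I : ℝ → ℝ → ℝ) (i : ℝ → ℝ) (S₀ I₀ : ℝ → ℝ)
    (hS₀c : Continuous S₀) (hI₀c : Continuous I₀)
    (hibd : ∀ t ∈ Icc (0:ℝ) T, 0 ≤ i t ∧ i t ≤ n₀)
    (hSd : ∀ x ∈ Icc (0:ℝ) xmax, ∀ t ∈ Icc (0:ℝ) T,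
      HasDerivAt (S x) (I x t * (μ - β₀ * S x t) - D * (S x t - x / m * (n₀ - i t))) t)
    (hId : ∀ x ∈ Icc (0:ℝ) xmax, ∀ t ∈ Icc (0:ℝ) T,
      HasDerivAt (I x) (I x t * (-μ + β₀ * S x t) - D * (I x t - x / m * i t)) t)
    (hSinit : ∀ x ∈ Icc (0:ℝ) xmax, S x 0 = S₀ x)
    (hIinit : ∀ x ∈ Icc (0:ℝ) xmax, I x 0 = I₀ x)
    (hbd : ∀ x ∈ Icc (0:ℝ) xmax, ∀ t ∈ Icc (0:ℝ) T,
      0 ≤ S x t ∧ S x t ≤ Bd ∧ 0 ≤ I x t ∧ I x t ≤ Bd)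
    {t : ℝ} (ht : t ∈ Icc (0:ℝ) T) :
    ContinuousOn (fun x => I x t) (Icc (0:ℝ) xmax) := by
  have hT0 : (0:ℝ) ≤ T := ht.1.trans ht.2
  set K₁ : ℝ := μ + 2 * β₀ * Bd + D with hK₁def
  have hK₁ : 0 < K₁ := by positivity
  set E : ℝ := Real.exp (K₁ * T) with hEdef
  have hE : 0 < E := Real.exp_pos _
  -- key Lipschitz-type estimate between parameters
  have hkey : ∀ x ∈ Icc (0:ℝ) xmax, ∀ y ∈ Icc (0:ℝ) xmax,
      |I x t - I y t| ≤ E * (|S₀ x - S₀ y| + |I₀ x - I₀ y|) + D * n₀ / (m * K₁) * E * |x - y| := by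
    intro x hx y hy
    set ε : ℝ := D * n₀ / m * |x - y| with hεdef
    have hε0 : 0 ≤ ε := by positivity
    set F : ℝ → ℝ × ℝ := fun s => (S x s - S y s, I x s - I y s) with hFdef
    set F' : ℝ → ℝ × ℝ := fun s =>
      ((I x s * (μ - β₀ * S x s) - D * (S x s - x / m * (n₀ - i s))) -
        (I y s * (μ - β₀ * S y s) - D * (S y s - y / m * (n₀ - i s))),
       (I x s * (-μ + β₀ * S x s) - D * (I x s - x / m * i s)) -
        (I y s * (-μ + β₀ * S y s) - D * (I y s - y / m * i s))) with hF'def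
    have hFd : ∀ s ∈ Icc (0:ℝ) T, HasDerivAt F (F' s) s := fun s hs =>
      ((hSd x hx s hs).sub (hSd y hy s hs)).prodMk ((hId x hx s hs).sub (hId y hy s hs))
    have hFcont : ContinuousOn F (Icc 0 T) :=
      fun s hs => (hFd s hs).continuousAt.continuousWithinAt
    have hnorm : ∀ s, ‖F s‖ = max |S x s - S y s| |I x s - I y s| := by
      intro s; simp [hFdef, Prod.norm_def, Real.norm_eq_abs]
    have hbound : ∀ s ∈ Ico (0:ℝ) T, ‖F' s‖ ≤ K₁ * ‖F s‖ + ε := by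
      intro s hs
      have hs' : s ∈ Icc (0:ℝ) T := Ico_subset_Icc_self hs
      obtain ⟨hi0, hin⟩ := hibd s hs'
      obtain ⟨hSx0, hSxB, hIx0, hIxB⟩ := hbd x hx s hs'
      obtain ⟨hSy0, hSyB, hIy0, hIyB⟩ := hbd y hy s hs'
      set a := S x s; set a' := S y s; set b := I x s; set b' := I y s
      set W := max |a - a'| |b - b'| with hWdef
      have hW0 : 0 ≤ W := le_trans (abs_nonneg _) (le_max_left _ _)
      have haW : |a - a'| ≤ W := le_max_left _ _
      have hbW : |b - b'| ≤ W := le_max_right _ _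
      have hprod : |b * a - b' * a'| ≤ Bd * W + Bd * W := by
        have e2 : b * a - b' * a' = a * (b - b') + b' * (a - a') := by ring
        calc |b * a - b' * a'| ≤ |a * (b - b')| + |b' * (a - a')| := by rw [e2]; exact abs_add_le _ _
          _ = |a| * |b - b'| + |b'| * |a - a'| := by rw [abs_mul, abs_mul]
          _ ≤ Bd * W + Bd * W := by
              gcongr
              · rw [abs_of_nonneg hSx0]; exact hSxB
              · rw [abs_of_nonneg hIy0]; exact hIyB
      -- first component
      have h1 : |(F' s).1| ≤ K₁ * W + ε := by
        have e1 : (F' s).1 =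
            μ * (b - b') + -(β₀ * (b * a - b' * a')) + -(D * (a - a'))
              + D * (n₀ - i s) / m * (x - y) := by
          simp only [hF'def]; ring
        have hlast : |D * (n₀ - i s) / m * (x - y)| ≤ ε := by
          rw [abs_mul, abs_of_nonneg (div_nonneg (mul_nonneg hD.le (by linarith)) hm.le)]
          rw [hεdef]
          gcongr
          linarith
        calc |(F' s).1| ≤ |μ * (b - b')| + |-(β₀ * (b * a - b' * a'))| + |-(D * (a - a'))|
              + |D * (n₀ - i s) / m * (x - y)| := by rw [e1]; exact abs_add_four _ _ _ _
          _ = μ * |b - b'| + β₀ * |b * a - b' * a'| + D * |a - a'|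
              + |D * (n₀ - i s) / m * (x - y)| := by
              rw [abs_neg, abs_neg, abs_mul, abs_mul, abs_mul,
                abs_of_nonneg hμ.le, abs_of_nonneg hβ.le, abs_of_nonneg hD.le]
          _ ≤ μ * W + β₀ * (Bd * W + Bd * W) + D * W + ε := by gcongr
          _ = K₁ * W + ε := by rw [hK₁def]; ring
      -- second component
      have h2 : |(F' s).2| ≤ K₁ * W + ε := by
        have e1 : (F' s).2 =
            -(μ * (b - b')) + β₀ * (b * a - b' * a') + -(D * (b - b'))
              + D * i s / m * (x - y) := by
          simp only [hF'def]; ring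
        have hlast : |D * i s / m * (x - y)| ≤ ε := by
          rw [abs_mul, abs_of_nonneg (by positivity : (0:ℝ) ≤ D * i s / m)]
          rw [hεdef]
          gcongr
        calc |(F' s).2| ≤ |-(μ * (b - b'))| + |β₀ * (b * a - b' * a')| + |-(D * (b - b'))|
              + |D * i s / m * (x - y)| := by rw [e1]; exact abs_add_four _ _ _ _
          _ = μ * |b - b'| + β₀ * |b * a - b' * a'| + D * |b - b'|
              + |D * i s / m * (x - y)| := by
              rw [abs_neg, abs_neg, abs_mul, abs_mul, abs_mul,
                abs_of_nonneg hμ.le, abs_of_nonneg hβ.le, abs_of_nonneg hD.le]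
          _ ≤ μ * W + β₀ * (Bd * W + Bd * W) + D * W + ε := by gcongr
          _ = K₁ * W + ε := by rw [hK₁def]; ring
      have : ‖F' s‖ = max |(F' s).1| |(F' s).2| := by
        simp [Prod.norm_def, Real.norm_eq_abs]
      rw [this, hnorm]
      exact max_le h1 h2
    set δ : ℝ := |S₀ x - S₀ y| + |I₀ x - I₀ y| with hδdef
    have hδ0 : 0 ≤ δ := by positivity
    have hF0 : ‖F 0‖ ≤ δ := by
      rw [hnorm, hSinit x hx, hSinit y hy, hIinit x hx, hIinit y hy]
      exact max_le (le_add_of_nonneg_right (abs_nonneg _)) (le_add_of_nonneg_left (abs_nonneg _))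
    have hG := norm_le_gronwallBound_of_norm_deriv_right_le hFcont
      (fun s hs => (hFd s (Ico_subset_Icc_self hs)).hasDerivWithinAt) hF0 hbound t ht
    rw [sub_zero, hnorm] at hG
    have h2 : |I x t - I y t| ≤ gronwallBound δ K₁ ε t := (le_max_right _ _).trans hG
    have hexp : Real.exp (K₁ * t) ≤ E := by
      rw [hEdef]
      exact Real.exp_le_exp.2 (mul_le_mul_of_nonneg_left ht.2 hK₁.le)
    have h3 : gronwallBound δ K₁ ε t ≤ δ * E + ε / K₁ * E := by
      rw [gronwallBound_of_K_ne_0 hK₁.ne']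
      beta_reduce
      have e1 : δ * Real.exp (K₁ * t) ≤ δ * E := by gcongr
      have e2 : ε / K₁ * (Real.exp (K₁ * t) - 1) ≤ ε / K₁ * E := by
        apply mul_le_mul_of_nonneg_left _ (by positivity)
        linarith
      exact add_le_add e1 e2
    have h4 : ε / K₁ * E = D * n₀ / (m * K₁) * E * |x - y| := by
      rw [hεdef]; field_simp
    calc |I x t - I y t| ≤ δ * E + ε / K₁ * E := h2.trans h3
      _ = E * (|S₀ x - S₀ y| + |I₀ x - I₀ y|) + D * n₀ / (m * K₁) * E * |x - y| := by
          rw [h4, hδdef]; ring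
  -- continuity from the Lipschitz-type estimate
  intro x hx
  have hfx : Filter.Tendsto (fun y => dist (I y t) (I x t)) (nhdsWithin x (Icc 0 xmax)) (nhds 0) := by
    apply squeeze_zero' (Filter.Eventually.of_forall fun y => dist_nonneg)
      (g := fun y => E * (|S₀ y - S₀ x| + |I₀ y - I₀ x|) + D * n₀ / (m * K₁) * E * |y - x|)
    · filter_upwards [self_mem_nhdsWithin] with y hy
      rw [Real.dist_eq]
      exact hkey y hy x hx
    · have hc : Continuous (fun y =>
          E * (|S₀ y - S₀ x| + |I₀ y - I₀ x|) + D * n₀ / (m * K₁) * E * |y - x|) := by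
        fun_prop
      have := (hc.tendsto x).mono_left (nhdsWithin_le_nhds (s := Icc 0 xmax))
      simpa using this
  exact tendsto_iff_dist_tendsto_zero.2 hfx

/-- Contraction estimate for the map `i ↦ î` (case `D_I = D_S`):
`‖î₂ - î₁‖_λ ≤ (D_I/(λ - M))‖i₂ - i₁‖_λ` with `M = max_{x∈J} C(x)`,
`C(x) = β₀(N(x,0) + n₀ x/m) + μ + D_I`; in particular if `λ > M + D_I`
the map is a contraction for `‖·‖_λ`. -/
theorem contraction_estimate_on_averages
    (xmax m μ β₀ DS DI : ℝ) (p : ℝ → ℝ)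
    (hxmax : 0 < xmax) (hm : 0 < m) (hμ : 0 < μ) (hβ₀ : 0 < β₀)
    (hDS : 0 < DS) (hDI : 0 < DI)
    (hD : DI = DS)
    (hp_nonneg : ∀ x ∈ Icc (0:ℝ) xmax, 0 ≤ p x) (hp0 : p 0 = 0)
    (hp_int : ∫ x in (0:ℝ)..xmax, p x = 1)
    (hm_def : m = ∫ x in (0:ℝ)..xmax, x * p x)
    (T : ℝ) (hT : 0 < T)
    (S₀ I₀ : ℝ → ℝ)
    (hS₀ : ContDiff ℝ 1 S₀) (hI₀ : ContDiff ℝ 1 I₀)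
    (hS₀nonneg : ∀ x ∈ Icc (0:ℝ) xmax, 0 ≤ S₀ x)
    (hI₀nonneg : ∀ x ∈ Icc (0:ℝ) xmax, 0 ≤ I₀ x)
    (hS₀zero : S₀ 0 = 0) (hI₀zero : I₀ 0 = 0)
    (n₀ : ℝ) (hn₀pos : 0 < n₀)
    (hn₀ : n₀ = (∫ x in (0:ℝ)..xmax, S₀ x * p x) + ∫ x in (0:ℝ)..xmax, I₀ x * p x)
    (i₁ i₂ : ℝ → ℝ)
    (hi₁cont : ContinuousOn i₁ (Icc 0 T)) (hi₂cont : ContinuousOn i₂ (Icc 0 T))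
    (hi₁bd : ∀ t ∈ Icc (0:ℝ) T, 0 ≤ i₁ t ∧ i₁ t ≤ n₀)
    (hi₂bd : ∀ t ∈ Icc (0:ℝ) T, 0 ≤ i₂ t ∧ i₂ t ≤ n₀)
    (S₁ I₁ S₂ I₂ : ℝ → ℝ → ℝ)
    (hS₁eq : ∀ x ∈ Icc (0:ℝ) xmax, ∀ t ∈ Icc (0:ℝ) T,
      HasDerivAt (S₁ x) (I₁ x t * (μ - β₀ * S₁ x t) - DS * (S₁ x t - x / m * (n₀ - i₁ t))) t)
    (hI₁eq : ∀ x ∈ Icc (0:ℝ) xmax, ∀ t ∈ Icc (0:ℝ) T,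
      HasDerivAt (I₁ x) (I₁ x t * (-μ + β₀ * S₁ x t) - DI * (I₁ x t - x / m * i₁ t)) t)
    (hS₂eq : ∀ x ∈ Icc (0:ℝ) xmax, ∀ t ∈ Icc (0:ℝ) T,
      HasDerivAt (S₂ x) (I₂ x t * (μ - β₀ * S₂ x t) - DS * (S₂ x t - x / m * (n₀ - i₂ t))) t)
    (hI₂eq : ∀ x ∈ Icc (0:ℝ) xmax, ∀ t ∈ Icc (0:ℝ) T,
      HasDerivAt (I₂ x) (I₂ x t * (-μ + β₀ * S₂ x t) - DI * (I₂ x t - x / m * i₂ t)) t)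
    (hS₁init : ∀ x ∈ Icc (0:ℝ) xmax, S₁ x 0 = S₀ x)
    (hI₁init : ∀ x ∈ Icc (0:ℝ) xmax, I₁ x 0 = I₀ x)
    (hS₂init : ∀ x ∈ Icc (0:ℝ) xmax, S₂ x 0 = S₀ x)
    (hI₂init : ∀ x ∈ Icc (0:ℝ) xmax, I₂ x 0 = I₀ x)
    (hI₁bd : ∀ x ∈ Icc (0:ℝ) xmax, ∀ t ∈ Icc (0:ℝ) T,
      0 ≤ I₁ x t ∧ I₁ x t ≤ S₁ x t + I₁ x t)
    (hI₂bd : ∀ x ∈ Icc (0:ℝ) xmax, ∀ t ∈ Icc (0:ℝ) T,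
      0 ≤ I₂ x t ∧ I₂ x t ≤ S₂ x t + I₂ x t)
    (Cfn : ℝ → ℝ)
    (hCfn : ∀ x, Cfn x = β₀ * (S₀ x + I₀ x + n₀ * x / m) + μ + DI)
    (M : ℝ) (hM : IsGreatest (Cfn '' Icc (0:ℝ) xmax) M)
    (lam : ℝ) (hlam : M < lam) :
    (⨆ τ : Icc (0:ℝ) T, Real.exp (-lam * τ) *
        |(∫ x in (0:ℝ)..xmax, I₂ x τ * p x) - ∫ x in (0:ℝ)..xmax, I₁ x τ * p x|) ≤
      DI / (lam - M) * ⨆ τ : Icc (0:ℝ) T, Real.exp (-lam * τ) * |i₂ τ - i₁ τ| ∧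
    (M + DI < lam → DI / (lam - M) < 1) := by
  -- use a single diffusion constant DI
  rw [← hD] at hS₁eq hS₂eq
  classical
  haveI : Nonempty (Icc (0:ℝ) T) := ⟨⟨0, le_refl 0, hT.le⟩⟩
  -- basic integrability facts
  have hp_ii : IntervalIntegrable p MeasureTheory.volume 0 xmax := by
    by_contra h
    rw [intervalIntegral.integral_undef h] at hp_int
    norm_num at hp_int
  have hxp_ii : IntervalIntegrable (fun x => x * p x) MeasureTheory.volume 0 xmax := by
    by_contra h
    rw [intervalIntegral.integral_undef h] at hm_def
    rw [hm_def] at hm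
    norm_num at hm
  -- the exponentially weighted sup norm of i₂ - i₁
  set K := ⨆ τ : Icc (0:ℝ) T, Real.exp (-lam * ↑τ) * |i₂ ↑τ - i₁ ↑τ| with hKdef
  have hbddK : BddAbove (Set.range fun τ : Icc (0:ℝ) T =>
      Real.exp (-lam * ↑τ) * |i₂ ↑τ - i₁ ↑τ|) := by
    have hc : ContinuousOn (fun τ : ℝ => Real.exp (-lam * τ) * |i₂ τ - i₁ τ|) (Icc 0 T) :=
      (Continuous.continuousOn (by fun_prop)).mul ((hi₂cont.sub hi₁cont).abs)
    have hcomp := ((isCompact_Icc (a := (0:ℝ)) (b := T)).image_of_continuousOn hc).bddAbove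
    refine BddAbove.mono ?_ hcomp
    rintro v ⟨τ, rfl⟩
    exact ⟨τ, τ.2, rfl⟩
  have hK0 : 0 ≤ K := le_trans (by positivity) (le_ciSup hbddK ⟨0, le_refl 0, hT.le⟩)
  have hKs : ∀ s ∈ Icc (0:ℝ) T, |i₂ s - i₁ s| ≤ K * Real.exp (lam * s) := by
    intro s hs
    have h1 : Real.exp (-lam * s) * |i₂ s - i₁ s| ≤ K := le_ciSup hbddK ⟨s, hs⟩
    have h2 : Real.exp (lam * s) * Real.exp (-lam * s) = 1 := by
      rw [← Real.exp_add, show lam * s + -lam * s = 0 by ring, Real.exp_zero]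
    calc |i₂ s - i₁ s| = Real.exp (lam * s) * (Real.exp (-lam * s) * |i₂ s - i₁ s|) := by
          rw [← mul_assoc, h2, one_mul]
      _ ≤ Real.exp (lam * s) * K := by
          exact mul_le_mul_of_nonneg_left h1 (Real.exp_pos _).le
      _ = K * Real.exp (lam * s) := mul_comm _ _
  -- facts about M
  have hMx : ∀ x ∈ Icc (0:ℝ) xmax, β₀ * (S₀ x + I₀ x + n₀ * x / m) + μ + DI ≤ M := by
    intro x hx
    have := hM.2 ⟨x, hx, rfl⟩
    rwa [hCfn x] at this
  have hM0 : μ + DI ≤ M := by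
    have h := hMx 0 ⟨le_refl 0, hxmax.le⟩
    rw [hS₀zero, hI₀zero] at h
    have : β₀ * (0 + 0 + n₀ * 0 / m) = 0 := by ring
    linarith [h, this.symm ▸ h]
  have hlamM : 0 < lam - M := sub_pos.2 hlam
  -- explicit formula for S + I
  have hN1 : ∀ x ∈ Icc (0:ℝ) xmax, ∀ t ∈ Icc (0:ℝ) T,
      S₁ x t + I₁ x t = x / m * n₀ + (S₀ x + I₀ x - x / m * n₀) * Real.exp (-DI * t) := by
    intro x hx
    apply N_formula (D := DI) (c := x / m * n₀) (n := S₀ x + I₀ x) (N := fun t => S₁ x t + I₁ x t)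
    · intro t ht
      have h := (hS₁eq x hx t ht).add (hI₁eq x hx t ht)
      refine h.congr_deriv ?_
      have h1 : i₁ t + (n₀ - i₁ t) = n₀ := by ring
      ring
    · rw [hS₁init x hx, hI₁init x hx]
  have hN2 : ∀ x ∈ Icc (0:ℝ) xmax, ∀ t ∈ Icc (0:ℝ) T,
      S₂ x t + I₂ x t = x / m * n₀ + (S₀ x + I₀ x - x / m * n₀) * Real.exp (-DI * t) := by
    intro x hx
    apply N_formula (D := DI) (c := x / m * n₀) (n := S₀ x + I₀ x) (N := fun t => S₂ x t + I₂ x t)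
    · intro t ht
      have h := (hS₂eq x hx t ht).add (hI₂eq x hx t ht)
      refine h.congr_deriv ?_
      ring
    · rw [hS₂init x hx, hI₂init x hx]
  -- pointwise bounds on S, I
  have hbdgen : ∀ (S I : ℝ → ℝ → ℝ),
      (∀ x ∈ Icc (0:ℝ) xmax, ∀ t ∈ Icc (0:ℝ) T, 0 ≤ I x t ∧ I x t ≤ S x t + I x t) →
      (∀ x ∈ Icc (0:ℝ) xmax, ∀ t ∈ Icc (0:ℝ) T,
        S x t + I x t = x / m * n₀ + (S₀ x + I₀ x - x / m * n₀) * Real.exp (-DI * t)) →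
      ∀ x ∈ Icc (0:ℝ) xmax, ∀ t ∈ Icc (0:ℝ) T,
        0 ≤ S x t ∧ S x t ≤ S₀ x + I₀ x + x / m * n₀ ∧
        0 ≤ I x t ∧ I x t ≤ S₀ x + I₀ x + x / m * n₀ := by
    intro S I hIbd hNf x hx t ht
    obtain ⟨hI0, hIN⟩ := hIbd x hx t ht
    have hS0 : 0 ≤ S x t := by linarith
    have hNfx := hNf x hx t ht
    have hx0 : 0 ≤ x := hx.1
    have hn : 0 ≤ S₀ x + I₀ x := by
      have h1 := hS₀nonneg x hx
      have h2 := hI₀nonneg x hx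
      linarith
    have hc0 : 0 ≤ x / m * n₀ := by positivity
    have he1 : Real.exp (-DI * t) ≤ 1 :=
      Real.exp_le_one_iff.2 (by nlinarith [mul_nonneg hDI.le ht.1])
    have he0 : 0 < Real.exp (-DI * t) := Real.exp_pos _
    have hNle : S x t + I x t ≤ S₀ x + I₀ x + x / m * n₀ := by
      rw [hNfx]
      nlinarith [mul_nonneg hn (by linarith : (0:ℝ) ≤ 1 - Real.exp (-DI * t)),
        mul_nonneg hc0 he0.le]
    exact ⟨hS0, by linarith, hI0, by linarith⟩
  have hbd1 := hbdgen S₁ I₁ hI₁bd hN1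
  have hbd2 := hbdgen S₂ I₂ hI₂bd hN2
  -- global bound
  obtain ⟨C₀, hC₀⟩ := (isCompact_Icc (a := (0:ℝ)) (b := xmax)).exists_bound_of_continuousOn
    ((hS₀.continuous.add hI₀.continuous).continuousOn)
  set Bd : ℝ := C₀ + xmax / m * n₀ with hBddef
  have hBdle : ∀ x ∈ Icc (0:ℝ) xmax, S₀ x + I₀ x + x / m * n₀ ≤ Bd := by
    intro x hx
    have h1 : S₀ x + I₀ x ≤ C₀ := by
      have := hC₀ x hx
      rw [Real.norm_eq_abs] at this
      exact (le_abs_self _).trans this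
    have h2 : x / m * n₀ ≤ xmax / m * n₀ := by gcongr; exact hx.2
    rw [hBddef]; linarith
  have hBd0 : 0 ≤ Bd := by
    have h := hBdle 0 ⟨le_refl 0, hxmax.le⟩
    rw [hS₀zero, hI₀zero] at h
    have h0 : (0:ℝ) + 0 + 0 / m * n₀ = 0 := by ring
    linarith [h0 ▸ h]
  have hbdglob : ∀ (S I : ℝ → ℝ → ℝ),
      (∀ x ∈ Icc (0:ℝ) xmax, ∀ t ∈ Icc (0:ℝ) T,
        0 ≤ S x t ∧ S x t ≤ S₀ x + I₀ x + x / m * n₀ ∧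
        0 ≤ I x t ∧ I x t ≤ S₀ x + I₀ x + x / m * n₀) →
      ∀ x ∈ Icc (0:ℝ) xmax, ∀ t ∈ Icc (0:ℝ) T,
        0 ≤ S x t ∧ S x t ≤ Bd ∧ 0 ≤ I x t ∧ I x t ≤ Bd := by
    intro S I h x hx t ht
    obtain ⟨a1, a2, a3, a4⟩ := h x hx t ht
    have hb := hBdle x hx
    exact ⟨a1, a2.trans hb, a3, a4.trans hb⟩
  -- continuity in x, for integrability
  have hIc1 : ∀ t ∈ Icc (0:ℝ) T, ContinuousOn (fun x => I₁ x t) (Icc (0:ℝ) xmax) :=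
    fun t ht => I_cont xmax m μ β₀ DI T n₀ Bd hm hμ hβ₀ hDI hn₀pos.le hBd0
      S₁ I₁ i₁ S₀ I₀ hS₀.continuous hI₀.continuous hi₁bd hS₁eq hI₁eq hS₁init hI₁init
      (hbdglob S₁ I₁ hbd1) ht
  have hIc2 : ∀ t ∈ Icc (0:ℝ) T, ContinuousOn (fun x => I₂ x t) (Icc (0:ℝ) xmax) :=
    fun t ht => I_cont xmax m μ β₀ DI T n₀ Bd hm hμ hβ₀ hDI hn₀pos.le hBd0
      S₂ I₂ i₂ S₀ I₀ hS₀.continuous hI₀.continuous hi₂bd hS₂eq hI₂eq hS₂init hI₂init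
      (hbdglob S₂ I₂ hbd2) ht
  -- the main pointwise Grönwall estimate
  have hu : ∀ x ∈ Icc (0:ℝ) xmax, ∀ t ∈ Icc (0:ℝ) T,
      |I₂ x t - I₁ x t| ≤ DI * (x / m) * K / (lam - M) * Real.exp (lam * t) := by
    intro x hx
    set ρ : ℝ := DI * (x / m) * K / (lam - M) with hρdef
    have hx0 : 0 ≤ x := hx.1
    have hρ0 : 0 ≤ ρ := by positivity
    have hcK : DI * (x / m) * K = ρ * (lam - M) := by
      rw [hρdef]; field_simp
    have hfd : ∀ t ∈ Icc (0:ℝ) T, HasDerivAt (fun s => I₂ x s - I₁ x s)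
        ((-μ - DI + β₀ * (S₂ x t - I₁ x t)) * (I₂ x t - I₁ x t)
          + DI * (x / m) * (i₂ t - i₁ t)) t := by
      intro t ht
      have hder := (hI₂eq x hx t ht).sub (hI₁eq x hx t ht)
      have hN12 : S₁ x t + I₁ x t = S₂ x t + I₂ x t := by
        rw [hN1 x hx t ht, hN2 x hx t ht]
      refine hder.congr_deriv ?_
      linear_combination (-(β₀ * I₁ x t)) * hN12
    have hfc : ContinuousOn (fun s => I₂ x s - I₁ x s) (Icc 0 T) :=
      fun s hs => (hfd s hs).continuousAt.continuousWithinAt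
    have hη : ∀ η : ℝ, 0 < η → ∀ t ∈ Icc (0:ℝ) T,
        |I₂ x t - I₁ x t| ≤ (ρ + η) * Real.exp (lam * t) := by
      intro η hηpos
      have hB : ∀ s : ℝ, HasDerivAt (fun s => (ρ + η) * Real.exp (lam * s))
          ((ρ + η) * (lam * Real.exp (lam * s))) s := by
        intro s
        have h := (((hasDerivAt_id s).const_mul lam).exp).const_mul (ρ + η)
        simp only [id_eq] at h
        refine h.congr_deriv ?_
        ring
      have hf0 : ‖(fun s => I₂ x s - I₁ x s) 0‖ ≤ (ρ + η) * Real.exp (lam * 0) := by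
        simp only [Real.norm_eq_abs, hI₂init x hx, hI₁init x hx, sub_self, abs_zero]
        positivity
      have hres := image_norm_le_of_norm_deriv_right_lt_deriv_boundary
        (f := fun s => I₂ x s - I₁ x s)
        (f' := fun s => (-μ - DI + β₀ * (S₂ x s - I₁ x s)) * (I₂ x s - I₁ x s)
          + DI * (x / m) * (i₂ s - i₁ s))
        (B := fun s => (ρ + η) * Real.exp (lam * s))
        (B' := fun s => (ρ + η) * (lam * Real.exp (lam * s)))
        hfc (fun s hs => (hfd s (Ico_subset_Icc_self hs)).hasDerivWithinAt) hf0 hB ?_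
      · intro t ht
        simpa [Real.norm_eq_abs] using hres ht
      · -- the strict differential inequality at touching points
        intro s hs hfs
        have hs' : s ∈ Icc (0:ℝ) T := Ico_subset_Icc_self hs
        rw [Real.norm_eq_abs] at hfs
        obtain ⟨-, -, hI₁0, hI₁le⟩ := hbd1 x hx s hs'
        obtain ⟨hS₂0, hS₂le, -, -⟩ := hbd2 x hx s hs'
        have hMX := hMx x hx
        have ha : |(-μ - DI + β₀ * (S₂ x s - I₁ x s))| ≤ M := by
          have hbnd : |S₂ x s - I₁ x s| ≤ S₀ x + I₀ x + x / m * n₀ :=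
            abs_le.2 ⟨by linarith, by linarith⟩
          have h2 : |β₀ * (S₂ x s - I₁ x s)| ≤ β₀ * (S₀ x + I₀ x + x / m * n₀) := by
            rw [abs_mul, abs_of_nonneg hβ₀.le]
            exact mul_le_mul_of_nonneg_left hbnd hβ₀.le
          rw [show n₀ * x / m = x / m * n₀ by ring] at hMX
          obtain ⟨h2a, h2b⟩ := abs_le.1 h2
          rw [abs_le]
          exact ⟨by linarith, by linarith⟩
        have he : (0:ℝ) < Real.exp (lam * s) := Real.exp_pos _
        have hΔ := hKs s hs'
        have e1 : ‖(-μ - DI + β₀ * (S₂ x s - I₁ x s)) * (I₂ x s - I₁ x s)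
            + DI * (x / m) * (i₂ s - i₁ s)‖
            ≤ |(-μ - DI + β₀ * (S₂ x s - I₁ x s))| * |I₂ x s - I₁ x s|
              + DI * (x / m) * |i₂ s - i₁ s| := by
          rw [Real.norm_eq_abs]
          refine (abs_add_le _ _).trans ?_
          rw [abs_mul, abs_mul, abs_of_nonneg (by positivity : (0:ℝ) ≤ DI * (x / m))]
        have e2 : |(-μ - DI + β₀ * (S₂ x s - I₁ x s))| * |I₂ x s - I₁ x s|
            ≤ M * ((ρ + η) * Real.exp (lam * s)) := by
          rw [hfs]
          exact mul_le_mul_of_nonneg_right ha (by positivity)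
        have e3 : DI * (x / m) * |i₂ s - i₁ s| ≤ ρ * (lam - M) * Real.exp (lam * s) := by
          calc DI * (x / m) * |i₂ s - i₁ s| ≤ DI * (x / m) * (K * Real.exp (lam * s)) :=
              mul_le_mul_of_nonneg_left hΔ (by positivity)
            _ = ρ * (lam - M) * Real.exp (lam * s) := by
                rw [show DI * (x / m) * (K * Real.exp (lam * s))
                  = DI * (x / m) * K * Real.exp (lam * s) by ring, hcK]
        calc ‖_‖ ≤ M * ((ρ + η) * Real.exp (lam * s)) + ρ * (lam - M) * Real.exp (lam * s) := by
              refine e1.trans ?_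
              exact add_le_add e2 e3
          _ < (ρ + η) * (lam * Real.exp (lam * s)) := by
              nlinarith [mul_pos (mul_pos he hηpos) hlamM]
    -- let η → 0
    intro t ht
    by_contra hcon
    push_neg at hcon
    set e : ℝ := Real.exp (lam * t) with hedef
    have he : 0 < e := Real.exp_pos _
    set u : ℝ := |I₂ x t - I₁ x t| with hudef
    have hcon' : ρ * e < u := by
      have : ρ * e = DI * (x / m) * K / (lam - M) * e := by rw [hρdef]
      calc ρ * e = DI * (x / m) * K / (lam - M) * Real.exp (lam * t) := by rw [this]
        _ < u := hcon
    have hηval : (0:ℝ) < (u - ρ * e) / (2 * e) := div_pos (by linarith) (by positivity)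
    have hb := hη ((u - ρ * e) / (2 * e)) hηval t ht
    have hmul : (u - ρ * e) / (2 * e) * e = (u - ρ * e) / 2 := by
      field_simp
    rw [← hedef, ← hudef] at hb
    nlinarith [hb, hmul]
  -- assemble the two claims
  constructor
  · -- the sup estimate
    apply ciSup_le
    rintro ⟨t, ht⟩
    show Real.exp (-lam * t) *
        |(∫ x in (0:ℝ)..xmax, I₂ x t * p x) - ∫ x in (0:ℝ)..xmax, I₁ x t * p x|
        ≤ DI / (lam - M) * K
    have hint1 : IntervalIntegrable (fun x => I₁ x t * p x) MeasureTheory.volume 0 xmax := by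
      apply IntervalIntegrable.continuousOn_mul hp_ii
      rw [uIcc_of_le hxmax.le]
      exact hIc1 t ht
    have hint2 : IntervalIntegrable (fun x => I₂ x t * p x) MeasureTheory.volume 0 xmax := by
      apply IntervalIntegrable.continuousOn_mul hp_ii
      rw [uIcc_of_le hxmax.le]
      exact hIc2 t ht
    have hdiff : (∫ x in (0:ℝ)..xmax, I₂ x t * p x) - ∫ x in (0:ℝ)..xmax, I₁ x t * p x
        = ∫ x in (0:ℝ)..xmax, (I₂ x t * p x - I₁ x t * p x) :=
      (intervalIntegral.integral_sub hint2 hint1).symm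
    set c : ℝ := DI * K * Real.exp (lam * t) / ((lam - M) * m) with hcdef
    have hc0 : 0 ≤ c := by positivity
    have habs : |∫ x in (0:ℝ)..xmax, (I₂ x t * p x - I₁ x t * p x)|
        ≤ ∫ x in (0:ℝ)..xmax, |I₂ x t * p x - I₁ x t * p x| :=
      intervalIntegral.abs_integral_le_integral_abs hxmax.le
    have hmono : (∫ x in (0:ℝ)..xmax, |I₂ x t * p x - I₁ x t * p x|)
        ≤ ∫ x in (0:ℝ)..xmax, c * (x * p x) := by
      apply intervalIntegral.integral_mono_on hxmax.le ((hint2.sub hint1).abs)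
        (hxp_ii.const_mul c)
      intro x hx
      have hpx := hp_nonneg x hx
      have e1 : |I₂ x t * p x - I₁ x t * p x| = |I₂ x t - I₁ x t| * p x := by
        rw [← sub_mul, abs_mul, abs_of_nonneg hpx]
      rw [e1]
      calc |I₂ x t - I₁ x t| * p x
          ≤ (DI * (x / m) * K / (lam - M) * Real.exp (lam * t)) * p x :=
            mul_le_mul_of_nonneg_right (hu x hx t ht) hpx
        _ = c * (x * p x) := by
            rw [hcdef]
            field_simp
    have hcm : (∫ x in (0:ℝ)..xmax, c * (x * p x)) = c * m := by
      rw [intervalIntegral.integral_const_mul, ← hm_def]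
    have hcmval : c * m = DI * K * Real.exp (lam * t) / (lam - M) := by
      rw [hcdef]
      field_simp
    have hfinal : |(∫ x in (0:ℝ)..xmax, I₂ x t * p x) - ∫ x in (0:ℝ)..xmax, I₁ x t * p x|
        ≤ DI * K * Real.exp (lam * t) / (lam - M) := by
      rw [hdiff, ← hcmval, ← hcm]
      exact habs.trans hmono
    have hee : Real.exp (-lam * t) * Real.exp (lam * t) = 1 := by
      rw [← Real.exp_add, show -lam * t + lam * t = 0 by ring, Real.exp_zero]
    calc Real.exp (-lam * t) *
        |(∫ x in (0:ℝ)..xmax, I₂ x t * p x) - ∫ x in (0:ℝ)..xmax, I₁ x t * p x|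
        ≤ Real.exp (-lam * t) * (DI * K * Real.exp (lam * t) / (lam - M)) :=
          mul_le_mul_of_nonneg_left hfinal (Real.exp_pos _).le
      _ = (Real.exp (-lam * t) * Real.exp (lam * t)) * (DI * K / (lam - M)) := by ring
      _ = DI / (lam - M) * K := by rw [hee]; ring
  · -- contraction when lam > M + DI
    intro hlt
    rw [div_lt_one hlamM]
    linarith
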